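/- Let p be a prime and let R be a finite commutative local ring with maximal ideal M whose residue field R/M has characteristic p. If the Cayley graph on R with connection set (R^×)^p (distinct a, b adjacent iff a − b ∈ (R^×)^p) is connected, then M = pR (equivalently, M is the ideal generated by p), and R/pR is a finite field. -/

import Mathlib

/-- The `p`-unitary Cayley graph of a commutative ring `R`: vertices are elements of `R`,
and distinct `a, b` are adjacent iff `a - b` is a `p`-th power of a unit.
(When `-1 ∈ (Rˣ)^p`, the relation is symmetric, so `fromRel` gives exactly this graph.) -/
def pUnitaryCayley (R : Type*) [CommRing R] (p : ℕ) : SimpleGraph R :=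
  SimpleGraph.fromRel (fun a b => ∃ u : Rˣ, a - b = (u : R) ^ p)

theorem stmt_7 (p : ℕ) (hp : p.Prime) (R : Type*) [CommRing R] [IsLocalRing R] [Fintype R]
    (hchar : CharP (IsLocalRing.ResidueField R) p)
    (hconn : (pUnitaryCayley R p).Connected) :
    IsLocalRing.maximalIdeal R = Ideal.span {(p : R)} ∧
      IsField (R ⧸ Ideal.span {(p : R)}) := by
  classical
  haveI := Fact.mk hp
  set I : Ideal R := Ideal.span {(p : R)} with hI
  -- p lies in the maximal ideal
  have hpM : (p : R) ∈ IsLocalRing.maximalIdeal R := by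
    have h0 : ((p : ℕ) : IsLocalRing.ResidueField R) = 0 := CharP.cast_eq_zero _ p
    have h1 : (IsLocalRing.residue R) ((p : ℕ) : R) = 0 := by
      rw [map_natCast]; exact h0
    exact Ideal.Quotient.eq_zero_iff_mem.mp h1
  have hIle : I ≤ IsLocalRing.maximalIdeal R := by
    rw [hI, Ideal.span_singleton_le_iff_mem]; exact hpM
  have hInetop : I ≠ ⊤ := fun h =>
    (IsLocalRing.maximalIdeal.isMaximal R).ne_top (top_le_iff.mp (h ▸ hIle))
  set A := R ⧸ I with hA
  haveI : Nontrivial A := Ideal.Quotient.nontrivial_iff.mpr hInetop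
  haveI : Finite A := Quotient.finite _
  haveI : IsLocalRing A :=
    IsLocalRing.of_surjective' (Ideal.Quotient.mk I) Ideal.Quotient.mk_surjective
  -- characteristic of A is p
  have hpA : ((p : ℕ) : A) = 0 := by
    rw [← map_natCast (Ideal.Quotient.mk I)]
    exact Ideal.Quotient.eq_zero_iff_mem.mpr (Ideal.mem_span_singleton_self _)
  have hcharA : ringChar A = p := by
    rcases hp.eq_one_or_self_of_dvd _ (ringChar.dvd hpA) with h1 | h2
    · exfalso
      haveI := ringChar.charP A
      have : ((1 : ℕ) : A) = 0 := by rw [← h1]; exact CharP.cast_eq_zero A _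
      simp at this
    · exact h2
  haveI : CharP A p := hcharA ▸ ringChar.charP A
  haveI : ExpChar A p := ExpChar.prime hp
  -- the additive subgroup generated by p-th powers of units is everything
  set S : AddSubgroup R := AddSubgroup.closure (Set.range fun u : Rˣ => (u : R) ^ p) with hS
  have hadj : ∀ a b : R, (pUnitaryCayley R p).Adj a b → a - b ∈ S := by
    intro a b hab
    rw [pUnitaryCayley, SimpleGraph.fromRel_adj] at hab
    rcases hab.2 with ⟨u, hu⟩ | ⟨u, hu⟩
    · exact hu ▸ AddSubgroup.subset_closure ⟨u, rfl⟩
    · have hb : b - a ∈ S := hu ▸ AddSubgroup.subset_closure ⟨u, rfl⟩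
      have := S.neg_mem hb
      rwa [neg_sub] at this
  have hwalk : ∀ {a b : R}, (pUnitaryCayley R p).Walk a b → a - b ∈ S := by
    intro a b w
    induction w with
    | nil => simpa using S.zero_mem
    | @cons a b c h w ih =>
      have := S.add_mem (hadj _ _ h) ih
      rwa [sub_add_sub_cancel] at this
  have hall : ∀ x : R, x ∈ S := by
    intro x
    obtain ⟨w⟩ := hconn.preconnected x 0
    simpa using hwalk w
  -- the Frobenius on A is surjective
  have hsurj : Function.Surjective (frobenius A p) := by
    intro a
    obtain ⟨x, rfl⟩ := Ideal.Quotient.mk_surjective a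
    refine AddSubgroup.closure_induction
      (p := fun y _ => ∃ b : A, frobenius A p b = Ideal.Quotient.mk I y)
      ?_ ?_ ?_ ?_ (hall x)
    · rintro _ ⟨u, rfl⟩
      exact ⟨Ideal.Quotient.mk I u, by rw [frobenius_def, ← map_pow]⟩
    · exact ⟨0, by rw [map_zero, map_zero]⟩
    · rintro y z _ _ ⟨b, hb⟩ ⟨c, hc⟩
      exact ⟨b + c, by rw [map_add, hb, hc, map_add]⟩
    · rintro y _ ⟨b, hb⟩
      exact ⟨-b, by rw [map_neg, hb, map_neg]⟩
  have hinj : Function.Injective (frobenius A p) :=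
    Finite.injective_iff_surjective.mpr hsurj
  -- every element of the maximal ideal of A has a p-th root in the maximal ideal
  have step : ∀ x ∈ IsLocalRing.maximalIdeal A,
      ∃ y ∈ IsLocalRing.maximalIdeal A, y ^ p = x := by
    intro x hx
    obtain ⟨y, hy⟩ := hsurj x
    rw [frobenius_def] at hy
    refine ⟨y, ?_, hy⟩
    rw [IsLocalRing.mem_maximalIdeal, mem_nonunits_iff]
    intro hyu
    have : IsUnit x := hy ▸ hyu.pow p
    exact (IsLocalRing.mem_maximalIdeal x).mp hx this
  have iter : ∀ j : ℕ, ∀ x ∈ IsLocalRing.maximalIdeal A,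
      ∃ y ∈ IsLocalRing.maximalIdeal A, y ^ (p ^ j) = x := by
    intro j
    induction j with
    | zero => exact fun x hx => ⟨x, hx, by simp⟩
    | succ j ih =>
      intro x hx
      obtain ⟨y, hy, hyx⟩ := ih x hx
      obtain ⟨z, hz, hzy⟩ := step y hy
      refine ⟨z, hz, ?_⟩
      have he : p ^ (j + 1) = p * p ^ j := by ring
      rw [he, pow_mul, hzy, hyx]
  -- the maximal ideal of A is nilpotent, hence zero
  have hmA : IsLocalRing.maximalIdeal A = ⊥ := by
    obtain ⟨n, hn⟩ : IsNilpotent (IsLocalRing.maximalIdeal A) := by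
      have h := IsArtinianRing.isNilpotent_jacobson_bot (R := A)
      rwa [IsLocalRing.jacobson_eq_maximalIdeal ⊥ bot_ne_top] at h
    rw [eq_bot_iff]
    intro x hx
    obtain ⟨y, hy, rfl⟩ := iter n x hx
    have h1 : y ^ (p ^ n) ∈ (IsLocalRing.maximalIdeal A) ^ (p ^ n) :=
      Ideal.pow_mem_pow hy _
    have h2 : (IsLocalRing.maximalIdeal A) ^ (p ^ n) ≤ (IsLocalRing.maximalIdeal A) ^ n :=
      Ideal.pow_le_pow_right (le_of_lt (Nat.lt_pow_self hp.one_lt))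
    have := h2 h1
    rwa [hn] at this
  -- conclude
  have hfield : IsField A := IsLocalRing.isField_iff_maximalIdeal_eq.mpr hmA
  refine ⟨le_antisymm ?_ hIle, hfield⟩
  intro x hx
  haveI : IsLocalHom (Ideal.Quotient.mk I) :=
    isLocalHom_of_le_jacobson_bot I
      ((IsLocalRing.jacobson_eq_maximalIdeal ⊥ bot_ne_top).ge.trans' hIle)
  have hxu : ¬ IsUnit (Ideal.Quotient.mk I x) := by
    intro h
    exact (IsLocalRing.mem_maximalIdeal x).mp hx (IsUnit.of_map (Ideal.Quotient.mk I) x h)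
  have : Ideal.Quotient.mk I x ∈ IsLocalRing.maximalIdeal A := by
    rw [IsLocalRing.mem_maximalIdeal, mem_nonunits_iff]; exact hxu
  rw [hmA, Ideal.mem_bot] at this
  exact Ideal.Quotient.eq_zero_iff_mem.mp this
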